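/- arXiv:1306.3877 — 2 statements merged into one kernel-verified Lean document; each statement's English description precedes it below -/
import Mathlib

section
/- Let G be a finite simple undirected graph, let v be a vertex of G, let C be the connected component of G containing v, and let H_v be the auxiliary graph of v. Suppose that C \ {v} is not a cluster graph, and suppose that X = {w1, w2} is a minimum vertex cover of H_v (of size 2). Then in the graph G \ {v}, either the connected component containing w1 is not a clique, or the connected component containing w2 is not a clique. -/
variable {V : Type*}

/-- The graph obtained from `G` by deleting the vertex set `S`
(deleted vertices become isolated, which does not affect cluster-ness of the rest). -/
def SimpleGraph.deleteSet (G : SimpleGraph V) (S : Set V) : SimpleGraph V where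
  Adj a b := G.Adj a b ∧ a ∉ S ∧ b ∉ S
  symm := by
    constructor
    intro a b h
    exact ⟨h.1.symm, h.2.2, h.2.1⟩
  loopless := by
    constructor
    intro a h
    exact G.ne_of_adj h.1 rfl

/-- `(u, v, w)` is a `P₃` in `G`: an induced path on the three distinct vertices
`u`, `v`, `w` with edges `uv` and `vw` and non-edge `uw`. -/
def IsP3 (G : SimpleGraph V) (u v w : V) : Prop :=
  G.Adj u v ∧ G.Adj v w ∧ ¬ G.Adj u w ∧ u ≠ w

/-- A cluster graph is a graph containing no `P₃`. -/
def IsClusterGraph (G : SimpleGraph V) : Prop :=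
  ∀ u v w : V, ¬ IsP3 G u v w

/-- `S` is a modulator of `G`: deleting `S` from `G` yields a cluster graph. -/
def IsModulator (G : SimpleGraph V) (S : Set V) : Prop :=
  IsClusterGraph (G.deleteSet S)

/-- A solution is a modulator of minimum cardinality. -/
def IsSolution (G : SimpleGraph V) (S : Set V) : Prop :=
  IsModulator G S ∧ ∀ T : Set V, IsModulator G T → S.ncard ≤ T.ncard

/-- `N1 G v` is the neighbourhood of `v` in `G`. -/
def N1 (G : SimpleGraph V) (v : V) : Set V := G.neighborSet v

/-- `N2 G v = N_G(N_G[v])` is the set of vertices at distance exactly `2` from `v`. -/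
def N2 (G : SimpleGraph V) (v : V) : Set V :=
  {w | w ≠ v ∧ ¬ G.Adj v w ∧ ∃ u, G.Adj v u ∧ G.Adj u w}

/-- Adjacency in the auxiliary graph `H_v`: non-edges of `G` inside `N1`,
and edges of `G` between `N1` and `N2`. -/
def HvAdj (G : SimpleGraph V) (v a b : V) : Prop :=
  (a ∈ N1 G v ∧ b ∈ N1 G v ∧ a ≠ b ∧ ¬ G.Adj a b) ∨
  (a ∈ N1 G v ∧ b ∈ N2 G v ∧ G.Adj a b) ∨
  (b ∈ N1 G v ∧ a ∈ N2 G v ∧ G.Adj a b)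

/-- `X` is a vertex cover of the auxiliary graph `H_v`: a subset of
`V(H_v) = N1 ∪ N2` meeting every edge of `H_v`. -/
def IsVCHv (G : SimpleGraph V) (v : V) (X : Set V) : Prop :=
  X ⊆ N1 G v ∪ N2 G v ∧ ∀ a b : V, HvAdj G v a b → a ∈ X ∨ b ∈ X

/-- `X` is a vertex cover of the graph `H`. -/
def IsVC (H : SimpleGraph V) (X : Set V) : Prop :=
  ∀ a b : V, H.Adj a b → a ∈ X ∨ b ∈ X

/-- The connected component of `v` in `G` is a clique. -/
def ComponentIsClique (G : SimpleGraph V) (v : V) : Prop :=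
  ∀ u w : V, G.Reachable v u → G.Reachable v w → u ≠ w → G.Adj u w

/-- The auxiliary graph `H_v` is an `s`-skein with seagulls `(x i, y i, z i)`:
it is the disjoint union of `s` seagulls (paths on three vertices with middle
vertex `y i ∈ N1` and endpoints `x i, z i ∈ N2`) and isolated vertices. -/
def IsSkein (G : SimpleGraph V) (v : V) (s : ℕ) (x y z : Fin s → V) : Prop :=
  (∀ i, x i ∈ N2 G v ∧ y i ∈ N1 G v ∧ z i ∈ N2 G v) ∧
  (∀ i, x i ≠ z i) ∧
  (∀ i j, i ≠ j → ({x i, y i, z i} ∩ {x j, y j, z j} : Set V) = ∅) ∧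
  (∀ i, HvAdj G v (x i) (y i) ∧ HvAdj G v (y i) (z i) ∧ ¬ HvAdj G v (x i) (z i)) ∧
  (∀ a b : V, HvAdj G v a b →
    ∃ i, (a = x i ∧ b = y i) ∨ (a = y i ∧ b = x i) ∨
         (a = y i ∧ b = z i) ∨ (a = z i ∧ b = y i))

/-- Suppose `C \ {v}` is not a cluster graph, where `C` is the
connected component of `v`, and `X = {w1, w2}` is a minimum vertex cover of
`H_v` (of size 2). Then in `G \ {v}` the component of `w1` or the component of
`w2` is not a clique. -/
theorem stmt_8 [Fintype V] (G : SimpleGraph V) (v w1 w2 : V)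
    (hCv : ∃ a b c : V, IsP3 (G.deleteSet {v}) a b c ∧
      G.Reachable v a ∧ G.Reachable v b ∧ G.Reachable v c)
    (hne : w1 ≠ w2)
    (hX : IsVCHv G v {w1, w2})
    (hmin : ∀ Y : Set V, IsVCHv G v Y → 2 ≤ Y.ncard) :
    ¬ ComponentIsClique (G.deleteSet {v}) w1 ∨
      ¬ ComponentIsClique (G.deleteSet {v}) w2 := by

  classical
  set G' := G.deleteSet {v} with hG'
  obtain ⟨a, b, c, ⟨hab, hbc, hnac, hac⟩, hva, hvb, hvc⟩ := hCv
  have hbv : b ≠ v := by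
    have := hab.2.2; simpa using this
  have hGab : G.Adj a b := hab.1
  have hGbc : G.Adj b c := hbc.1
  have hnG'ac : ¬ G'.Adj a c := hnac
  have hnGac : ¬ G.Adj a c := fun h => hnac ⟨h, hab.2.1, hbc.2.2⟩
  by_cases h1 : G'.Reachable b w1
  · left
    intro hcl
    exact hnG'ac (hcl a c (h1.symm.trans hab.reachable.symm) (h1.symm.trans hbc.reachable) hac)
  by_cases h2 : G'.Reachable b w2
  · right
    intro hcl
    exact hnG'ac (hcl a c (h2.symm.trans hab.reachable.symm) (h2.symm.trans hbc.reachable) hac)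
  exfalso
  -- escape lemma: from a G-walk ending at x ≠ v, get a neighbour of v reaching x in G'
  have aux : ∀ (w x : V) (p : G.Walk w x), x ≠ v →
      (∃ u, G.Adj v u ∧ G'.Reachable u x) ∨ (w ≠ v ∧ G'.Reachable w x) := by
    intro w x p
    induction p with
    | nil => intro hx; exact Or.inr ⟨hx, SimpleGraph.Reachable.refl _⟩
    | @cons w y x h q ih =>
      intro hx
      rcases ih hx with hl | ⟨hy, hr⟩
      · exact Or.inl hl
      · by_cases hw : w = v
        · exact Or.inl ⟨y, hw ▸ h, hr⟩
        · refine Or.inr ⟨hw, (SimpleGraph.Adj.reachable ?_).trans hr⟩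
          exact ⟨h, by simpa using hw, by simpa using hy⟩
  obtain ⟨p⟩ := hvb
  rcases aux v b p hbv with ⟨u, hvu, hub⟩ | ⟨hvv, _⟩
  swap
  · exact hvv rfl
  -- no vertex of b's component is in {w1, w2}
  have notX : ∀ x : V, G'.Reachable b x → x ∉ ({w1, w2} : Set V) := by
    intro x hx hmem
    rcases hmem with h | h
    · exact h1 (h ▸ hx)
    · exact h2 (by simpa using h ▸ hx)
  -- propagation: every vertex of b's component is adjacent to v
  have prop : ∀ (w x : V) (p : G'.Walk w x), G.Adj v w → G'.Reachable b w → G.Adj v x := by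
    intro w x p
    induction p with
    | nil => intro h _; exact h
    | @cons w y x h q ih =>
      intro hvw hbw
      obtain ⟨hwy, hwv, hyv⟩ := h
      have hbw' : G'.Reachable b y :=
        hbw.trans (SimpleGraph.Adj.reachable ⟨hwy, hwv, hyv⟩)
      have hy : G.Adj v y := by
        by_contra hny
        have hyN2 : y ∈ N2 G v := ⟨by simpa using hyv, hny, w, hvw, hwy⟩
        have hHv : HvAdj G v w y := Or.inr (Or.inl ⟨hvw, hyN2, hwy⟩)
        rcases hX.2 w y hHv with hmem | hmem
        · exact notX w hbw hmem
        · exact notX y hbw' hmem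
      exact ih hy hbw'
  have hba : G'.Reachable b a := hab.reachable.symm
  have hbc' : G'.Reachable b c := hbc.reachable
  have hua : G'.Reachable u a := hub.trans hba
  have huc : G'.Reachable u c := hub.trans hbc'
  obtain ⟨pa⟩ := hua
  obtain ⟨pc⟩ := huc
  have hvA : G.Adj v a := prop u a pa hvu hub.symm
  have hvC : G.Adj v c := prop u c pc hvu hub.symm
  have hHv : HvAdj G v a c := Or.inl ⟨hvA, hvC, hac, hnGac⟩
  rcases hX.2 a c hHv with hmem | hmem
  · exact notX a hba hmem
  · exact notX c hbc' hmem
end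

section
/- Let G be a finite simple undirected graph, let v be a vertex of G, and let H_v be the auxiliary graph of v. If H_v is an s-skein with seagulls (x_1,y_1,z_1), …, (x_s,y_s,z_s) (middle vertices y_i ∈ N1, endpoints x_i, z_i ∈ N2), and S is a modulator of G with v ∉ S such that there exist distinct indices i ≠ j with y_i ∉ S and y_j ∉ S, then x_i ∈ S and z_i ∈ S. -/
variable {V : Type*}

/-- If `H_v` is an `s`-skein with seagulls `(x i, y i, z i)` and
`S` is a modulator with `v ∉ S`, and there are distinct indices `i ≠ j` with
`y i ∉ S` and `y j ∉ S`, then `x i ∈ S` and `z i ∈ S`. -/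
theorem stmt_12 [Fintype V] (G : SimpleGraph V) (v : V) (s : ℕ)
    (x y z : Fin s → V) (hskein : IsSkein G v s x y z)
    (S : Set V) (hS : IsModulator G S) (hv : v ∉ S)
    (i j : Fin s) (hij : i ≠ j) (hyi : y i ∉ S) (hyj : y j ∉ S) :
    x i ∈ S ∧ z i ∈ S := by
  obtain ⟨hmem, hxz, hdisj, hedges, hcover⟩ := hskein
  obtain ⟨hxi, hyiN, hzi⟩ := hmem i
  -- y i is adjacent to v
  have hvy : G.Adj v (y i) := hyiN
  -- extract G.Adj (y i) (x i) from the Hv edge x i -- y i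
  have hxN2 := hxi
  obtain ⟨hxv, hxnadj, -⟩ := hxN2
  obtain ⟨hzv, hznadj, -⟩ := hzi
  have hadj_yx : G.Adj (y i) (x i) := by
    rcases (hedges i).1 with ⟨h1, _⟩ | ⟨h1, _, _⟩ | ⟨_, _, h⟩
    · exact absurd h1 hxnadj
    · exact absurd h1 hxnadj
    · exact h.symm
  have hadj_yz : G.Adj (y i) (z i) := by
    rcases (hedges i).2.1 with ⟨_, h2, _⟩ | ⟨_, _, h⟩ | ⟨_, h2, _⟩
    · exact absurd h2 hznadj
    · exact h
    · exact absurd h2.2.1 (by simpa using hvy)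
  constructor
  · by_contra hxS
    exact hS v (y i) (x i) ⟨⟨hvy, hv, hyi⟩, ⟨hadj_yx, hyi, hxS⟩,
      fun h => hxnadj h.1, fun h => hxv h.symm⟩
  · by_contra hzS
    exact hS v (y i) (z i) ⟨⟨hvy, hv, hyi⟩, ⟨hadj_yz, hyi, hzS⟩,
      fun h => hznadj h.1, fun h => hzv h.symm⟩
end
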